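/- Let ℓ = ℓ1 ℓ2 be a factorization of a Lyndon word ℓ with ℓ1 and ℓ2 both Lyndon. Define a sequence of suffixes of ℓ by s_0 = ℓ2, p_0 = ℓ1, and, as long as |p_i| > 1, s_{i+1} = p_i^r s_i and p_{i+1} = p_i^l (where p_i = p_i^l p_i^r is the costandard factorization of p_i). Then the longest proper Lyndon suffix ℓ^r of ℓ equals s_j for some index j ≥ 0. -/

import Mathlib

/- Words over a linearly ordered alphabet `I` are lists, compared by the
lexicographic order of Lean's `LinearOrder (List I)` instance, in which a word
is smaller than any word of which it is a proper prefix. -/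

variable {I : Type*} [LinearOrder I]

/-- A nonempty word is *Lyndon* if it is lexicographically smaller than
every proper nonempty suffix of itself. -/
def IsLyndon (w : List I) : Prop :=
  w ≠ [] ∧ ∀ i, 0 < i → i < w.length → w < w.drop i

/-- `r` is the longest proper suffix of `l` that is Lyndon
(the right factor `l^r` of the costandard factorization). -/
def LongestLyndonSuffix (l r : List I) : Prop :=
  r <:+ l ∧ r.length < l.length ∧ IsLyndon r ∧
    ∀ r', r' <:+ l → r'.length < l.length → IsLyndon r' → r'.length ≤ r.length

/-- `p` is the longest proper prefix of `l` that is Lyndon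
(the left factor `l^{ls}` of the standard factorization). -/
def LongestLyndonPrefix (l p : List I) : Prop :=
  p <+: l ∧ p.length < l.length ∧ IsLyndon p ∧
    ∀ p', p' <+: l → p'.length < l.length → IsLyndon p' → p'.length ≤ p.length

/-- `fs` is the canonical factorization of `w`: a nonempty, lexicographically
nonincreasing list of Lyndon words whose concatenation is `w`. -/
def IsCanonicalFactorization (w : List I) (fs : List (List I)) : Prop :=
  w = fs.flatten ∧ fs ≠ [] ∧ (∀ f ∈ fs, IsLyndon f) ∧ fs.Chain' (· ≥ ·)

private lemma my_lex_append {r : I → I → Prop} :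
    ∀ {a b : List I}, List.Lex r a b → ¬ a <+: b → ∀ v w, List.Lex r (a ++ v) (b ++ w)
  | _, _, .nil, hp => absurd List.nil_prefix hp
  | _, _, .rel h, _ => fun _ _ => .rel h
  | _, _, .cons h, hp => fun v w =>
      .cons (my_lex_append h (fun hq => hp (List.cons_prefix_cons.2 ⟨rfl, hq⟩)) v w)

private lemma my_lt_append {a b : List I} (h : a < b) (hlen : b.length < a.length)
    (v w : List I) : a ++ v < b ++ w := by
  have hp : ¬ a <+: b := fun hq => absurd hq.length_le (by omega)
  exact my_lex_append h hp v w

private lemma my_suffix_of_suffix {a b l : List I} (ha : a <:+ l) (hb : b <:+ l)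
    (h : a.length ≤ b.length) : a <:+ b := by
  rw [← List.reverse_prefix] at ha hb ⊢
  exact List.prefix_of_prefix_length_le ha hb (by simpa using h)

private lemma my_suffix_eq {a b l : List I} (ha : a <:+ l) (hb : b <:+ l)
    (h : a.length = b.length) : a = b := by
  obtain ⟨x, hx⟩ := ha
  obtain ⟨y, hy⟩ := hb
  have hxy : x ++ a = y ++ b := hx.trans hy.symm
  have : x.length = y.length := by
    have := congrArg List.length hxy
    simp at this; omega
  exact List.append_inj_right hxy this

/-- Key lemma: if `u` is Lyndon, `t` a nonempty proper suffix of `u`, and `t ++ v`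
is Lyndon, then `u ++ v` is Lyndon. -/
private lemma my_lyndon_append {u v t : List I} (hu : IsLyndon u) (ht : t <:+ u)
    (htne : t ≠ []) (htlt : t.length < u.length) (htv : IsLyndon (t ++ v)) :
    IsLyndon (u ++ v) := by
  obtain ⟨x, hx⟩ := ht
  have hxlen : x.length + t.length = u.length := by
    have := congrArg List.length hx; simpa using this
  have htdrop : u.drop x.length = t := by rw [← hx, List.drop_left]
  have hut : u < t := by
    rw [← htdrop]
    exact hu.2 x.length (by omega) (by have := List.length_pos_iff.2 htne; omega)
  have hutv : u ++ v < t ++ v := my_lt_append hut htlt v v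
  constructor
  · simp [hu.1]
  intro i hi0 hilen
  rw [List.length_append] at hilen
  rcases lt_or_ge i u.length with h | h
  · rw [List.drop_append_of_le_length h.le]
    exact my_lt_append (hu.2 i hi0 h) (by simp [List.length_drop]; omega) v v
  · have hvne : i - u.length < v.length := by omega
    have hdr : (u ++ v).drop i = v.drop (i - u.length) := by
      conv_lhs => rw [show i = u.length + (i - u.length) from by omega]
      rw [List.drop_length_add_append]
    have h2 : t ++ v < (t ++ v).drop (t.length + (i - u.length)) := by
      refine htv.2 _ (by have := List.length_pos_iff.2 htne; omega) ?_
      simp [List.length_append]; omega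
    rw [List.drop_length_add_append] at h2
    rw [hdr]
    exact lt_trans hutv h2

/-- For any factorization `ℓ = ℓ1 ℓ2` of a Lyndon word into two Lyndon words, iterating
`s_{i+1} = p_i^r s_i`, `p_{i+1} = p_i^l` (costandard factorizations) from `s_0 = ℓ2`,
`p_0 = ℓ1`, the longest proper Lyndon suffix `ℓ^r` of `ℓ` equals some `s_j`. -/
theorem costandard_suffix_mem_seq (ℓ ℓ1 ℓ2 : List I)
    (hℓ : IsLyndon ℓ) (h1 : IsLyndon ℓ1) (h2 : IsLyndon ℓ2) (hsplit : ℓ = ℓ1 ++ ℓ2)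
    (s p : ℕ → List I) (hs0 : s 0 = ℓ2) (hp0 : p 0 = ℓ1)
    (hstep : ∀ i, 1 < (p i).length →
      ∃ pl pr : List I, LongestLyndonSuffix (p i) pr ∧ p i = pl ++ pr ∧
        s (i + 1) = pr ++ s i ∧ p (i + 1) = pl)
    (r : List I) (hr : LongestLyndonSuffix ℓ r) :
    ∃ j : ℕ, (∀ i < j, 1 < (p i).length) ∧ s j = r := by
  obtain ⟨hrsuf, hrlen, hrL, hrmax⟩ := hr
  have h1ne : ℓ1 ≠ [] := h1.1
  have h2len : ℓ2.length ≤ r.length := by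
    refine hrmax ℓ2 ⟨ℓ1, hsplit.symm⟩ ?_ h2
    have := List.length_pos_iff.2 h1ne
    rw [hsplit]; simp; omega
  have key : ∀ n i, (p i).length ≤ n → (∀ k < i, 1 < (p k).length) →
      ℓ = p i ++ s i → (s i).length ≤ r.length →
      ∃ j, (∀ k < j, 1 < (p k).length) ∧ s j = r := by
    intro n
    induction n with
    | zero =>
      intro i hpn _ hspl hsl
      exfalso
      have := congrArg List.length hspl
      simp at this
      omega
    | succ n ih =>
      intro i hpn hrun hspl hsl
      have hlenl : ℓ.length = (p i).length + (s i).length := by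
        have := congrArg List.length hspl; simpa using this
      have hssuf : s i <:+ ℓ := ⟨p i, hspl.symm⟩
      rcases eq_or_lt_of_le hsl with heq | hlt
      · exact ⟨i, hrun, my_suffix_eq hssuf hrsuf heq⟩
      · have h1lt : 1 < (p i).length := by omega
        obtain ⟨pl, pr, ⟨hprsuf, hprlen, hprL, -⟩, hpeq, hs1, hp1⟩ := hstep i h1lt
        have hprne : 0 < pr.length := List.length_pos_iff.2 hprL.1
        have hplpr : pl.length + pr.length = (p i).length := by
          have := congrArg List.length hpeq; simp at this; omega
        have hplne : 0 < pl.length := by omega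
        have hspl' : ℓ = p (i+1) ++ s (i+1) := by
          rw [hp1, hs1, ← List.append_assoc, ← hpeq]; exact hspl
        have hs1suf : s (i+1) <:+ ℓ := ⟨p (i+1), hspl'.symm⟩
        have hs1len : (s (i+1)).length = pr.length + (s i).length := by
          rw [hs1]; simp
        have hrun' : ∀ k < i + 1, 1 < (p k).length := by
          intro k hk
          rcases Nat.lt_succ_iff_lt_or_eq.1 hk with h | h
          · exact hrun k h
          · rw [h]; exact h1lt
        by_cases hcmp : (s (i+1)).length ≤ r.length
        · exact ih (i+1) (by rw [hp1]; omega) hrun' hspl' hcmp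
        · exfalso
          push_neg at hcmp
          have hsir : s i <:+ r := my_suffix_of_suffix hssuf hrsuf hlt.le
          obtain ⟨t, htr⟩ := hsir
          have htlen : t.length + (s i).length = r.length := by
            have := congrArg List.length htr; simpa using this
          have htpr : t <:+ pr := by
            have hx := hrsuf
            obtain ⟨x, hx⟩ := hx
            rw [hspl, hpeq, ← htr, ← List.append_assoc] at hx
            have hx' : x ++ t = pl ++ pr := List.append_cancel_right hx
            exact my_suffix_of_suffix ⟨x, hx'⟩ (List.suffix_append pl pr) (by omega)
          have htne : t ≠ [] := by
            intro h; rw [h] at htlen; simp at htlen; omega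
          have hrLy : IsLyndon (t ++ s i) := by rw [htr]; exact hrL
          have hLy : IsLyndon (pr ++ s i) :=
            my_lyndon_append hprL htpr htne (by omega) hrLy
          have hfin : (s (i+1)).length ≤ r.length := by
            refine hrmax (s (i+1)) hs1suf (by omega) ?_
            rw [hs1]; exact hLy
          omega
  exact key (p 0).length 0 le_rfl (fun k hk => absurd hk (Nat.not_lt_zero k))
    (by rw [hs0, hp0]; exact hsplit) (by rw [hs0]; exact h2len)
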